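/- Let κ₀, κ₁, κ₂ ∈ {−1, +1} with κ₁ = κ₂. Then for all ξ, η ∈ ℝ⁴, the gradient ∇_η q_K(ξ, η) = κ₁(η/⟨η⟩ − (ξ+η)/⟨ξ+η⟩) vanishes if and only if ξ = 0; that is, the space resonant set of q_K is {(ξ, η) : ξ = 0}, which coincides with its time resonant set and with its space-time resonant set. -/

import Mathlib

/-- Japanese bracket `⟨x⟩ = √(1 + |x|²)` on `ℝ⁴`. -/
noncomputable def jb (x : EuclideanSpace ℝ (Fin 4)) : ℝ := Real.sqrt (1 + ‖x‖ ^ 2)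

lemma jb_pos (x : EuclideanSpace ℝ (Fin 4)) : 0 < jb x :=
  Real.sqrt_pos.mpr (by positivity)

lemma jb_sq (x : EuclideanSpace ℝ (Fin 4)) : jb x ^ 2 = 1 + ‖x‖ ^ 2 :=
  Real.sq_sqrt (by positivity)

lemma norm_lt_jb (x : EuclideanSpace ℝ (Fin 4)) : ‖x‖ < jb x := by
  nlinarith [jb_sq x, jb_pos x, norm_nonneg x]

/-- If `κ₁ = κ₂`, then for all `ξ, η ∈ ℝ⁴` the gradient
`∇_η q_K(ξ, η) = κ₁(η/⟨η⟩ − (ξ+η)/⟨ξ+η⟩)` vanishes iff `ξ = 0`: the space resonant set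
of `q_K` is `{(ξ, η) : ξ = 0}`, which coincides with its time resonant set (hence with
the space-time resonant set). -/
theorem maxwell_phase_space_resonant_set_res (κ₀ κ₁ κ₂ : ℝ)
    (h₀ : κ₀ = -1 ∨ κ₀ = 1) (h₁ : κ₁ = -1 ∨ κ₁ = 1) (h₂ : κ₂ = -1 ∨ κ₂ = 1)
    (heq : κ₁ = κ₂)
    (ξ η : EuclideanSpace ℝ (Fin 4)) :
    ((-κ₁ / jb (ξ + η)) • (ξ + η) + (κ₂ / jb η) • η = 0 ↔ ξ = 0) ∧
    ((-κ₁ / jb (ξ + η)) • (ξ + η) + (κ₂ / jb η) • η = 0 ↔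
      (-κ₀) * ‖ξ‖ - κ₁ * jb (ξ + η) + κ₂ * jb η = 0) := by
  subst heq
  have ha : 0 < jb (ξ + η) := jb_pos _
  have hb : 0 < jb η := jb_pos _
  have hκ1 : κ₁ * κ₁ = 1 := by rcases h₁ with h | h <;> rw [h] <;> norm_num
  have hκne : κ₁ ≠ 0 := by rcases h₁ with h | h <;> rw [h] <;> norm_num
  have key : (-κ₁ / jb (ξ + η)) • (ξ + η) + (κ₁ / jb η) • η = 0 ↔ ξ = 0 := by
    constructor
    · intro h
      have h' : (jb η)⁻¹ • η = (jb (ξ + η))⁻¹ • (ξ + η) := by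
        have h2 : (κ₁ / jb η) • η = (κ₁ / jb (ξ + η)) • (ξ + η) := by
          have h4 := neg_eq_of_add_eq_zero_left h
          rw [show (κ₁ / jb (ξ + η)) = -(-κ₁ / jb (ξ + η)) by ring, neg_smul, ← h4,
            neg_neg]
        have h3 := congrArg (fun v => κ₁ • v) h2
        simp only [smul_smul] at h3
        have e1 : κ₁ * (κ₁ / jb η) = (jb η)⁻¹ := by field_simp; nlinarith
        have e2 : κ₁ * (κ₁ / jb (ξ + η)) = (jb (ξ + η))⁻¹ := by field_simp; nlinarith
        rwa [e1, e2] at h3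
      have hn : (jb η)⁻¹ * ‖η‖ = (jb (ξ + η))⁻¹ * ‖ξ + η‖ := by
        have h5 := congrArg norm h'
        rw [norm_smul, norm_smul, Real.norm_eq_abs, Real.norm_eq_abs,
          abs_of_pos (inv_pos.mpr hb), abs_of_pos (inv_pos.mpr ha)] at h5
        exact h5
      have hcross : jb (ξ + η) * ‖η‖ = jb η * ‖ξ + η‖ := by
        field_simp at hn
        linarith
      have hsq : ‖η‖ ^ 2 = ‖ξ + η‖ ^ 2 := by
        have h4 : (jb (ξ + η) * ‖η‖) ^ 2 = (jb η * ‖ξ + η‖) ^ 2 := by rw [hcross]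
        have ja := jb_sq (ξ + η); have jc := jb_sq η
        nlinarith
      have hnorm : ‖η‖ = ‖ξ + η‖ := by
        nlinarith [norm_nonneg η, norm_nonneg (ξ + η)]
      have hjb : jb η = jb (ξ + η) := by unfold jb; rw [hnorm]
      rw [hjb] at h'
      have := smul_right_injective (EuclideanSpace ℝ (Fin 4))
        (inv_ne_zero (ne_of_gt ha)) h'
      have : η = ξ + η := this
      have : ξ = 0 := by
        have := right_eq_add.mp this
        exact this
      exact this
    · intro h
      subst h
      rw [zero_add]
      rw [← add_smul]
      have : -κ₁ / jb η + κ₁ / jb η = 0 := by ring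
      rw [this, zero_smul]
  refine ⟨key, key.trans ?_⟩
  constructor
  · intro h
    subst h
    simp only [norm_zero, zero_add]
    ring
  · intro h
    by_contra hne
    have hξ : 0 < ‖ξ‖ := norm_pos_iff.mpr hne
    have hd : |‖ξ + η‖ - ‖η‖| ≤ ‖ξ‖ := by
      have := abs_norm_sub_norm_le (ξ + η) η
      simpa using this
    have hd1 : ‖ξ + η‖ - ‖η‖ ≤ ‖ξ‖ := (abs_le.mp hd).2
    have hd2 : ‖η‖ - ‖ξ + η‖ ≤ ‖ξ‖ := by linarith [(abs_le.mp hd).1]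
    have ja := jb_sq (ξ + η); have jc := jb_sq η
    have la := norm_lt_jb (ξ + η); have lc := norm_lt_jb η
    have hna := norm_nonneg (ξ + η); have hnc := norm_nonneg η
    have hlt1 : jb (ξ + η) - jb η < ‖ξ‖ := by nlinarith
    have hlt2 : jb η - jb (ξ + η) < ‖ξ‖ := by nlinarith
    rcases h₀ with h0 | h0 <;> rcases h₁ with h1 | h1 <;> rw [h0, h1] at h <;> linarith
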